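/- Let (M,d) be Busemann convex, γ: ℝ → M a geodesic line and η: [0,∞) → M a geodesic ray with γ_0 = η_0. Suppose the convex hulls of γ([0,∞)) ∪ η([0,∞)) and of γ((−∞,0]) ∪ η([0,∞)) are each isometric to flat Euclidean sectors. Then for all s_− < 0 < s_+ and t ≥ 0, with λ ∈ (0,1) defined by (1−λ)s_− + λ s_+ = 0: d(η_t, γ_0)² ≤ (1−λ) d(η_t, γ_{s_−})² + λ d(η_t, γ_{s_+})² − (1−λ)λ d(γ_{s_−}, γ_{s_+})². -/

import Mathlib

open Set Metric Filter

variable {M : Type*}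

def IsGeodesic [MetricSpace M] (γ : ℝ → M) : Prop :=
  ∀ s ∈ Set.Icc (0:ℝ) 1, ∀ t ∈ Set.Icc (0:ℝ) 1,
    dist (γ s) (γ t) = |s - t| * dist (γ 0) (γ 1)

def GeodesicSpace (M : Type*) [MetricSpace M] : Prop :=
  ∀ x y : M, ∃ γ : ℝ → M, IsGeodesic γ ∧ γ 0 = x ∧ γ 1 = y

def Perp [MetricSpace M] (γ η : ℝ → M) : Prop :=
  ∀ t ∈ Set.Icc (0:ℝ) 1, ∀ s ∈ Set.Icc (0:ℝ) 1,
    dist (γ 0) (γ t) ≤ dist (η s) (γ t)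

def SO (M : Type*) [MetricSpace M] : Prop :=
  ∀ γ η : ℝ → M, IsGeodesic γ → IsGeodesic η → γ 0 = η 0 → Perp γ η → Perp η γ

def WeaklyConvex [MetricSpace M] (C : Set M) : Prop :=
  ∀ x ∈ C, ∀ y ∈ C, ∃ γ : ℝ → M, IsGeodesic γ ∧ γ 0 = x ∧ γ 1 = y ∧
    ∀ t ∈ Set.Icc (0:ℝ) 1, γ t ∈ C

def GeoConvex [MetricSpace M] (C : Set M) : Prop :=
  ∀ γ : ℝ → M, IsGeodesic γ → γ 0 ∈ C → γ 1 ∈ C → ∀ t ∈ Set.Icc (0:ℝ) 1, γ t ∈ C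

def NearestPt [MetricSpace M] (C : Set M) (x y : M) : Prop :=
  y ∈ C ∧ dist x y = Metric.infDist x C

def NE (M : Type*) [MetricSpace M] : Prop :=
  ∀ C : Set M, IsClosed C → WeaklyConvex C → ∀ x y xC yC : M,
    NearestPt C x xC → NearestPt C y yC → dist xC yC ≤ dist x y

def BusemannConvex (M : Type*) [MetricSpace M] : Prop :=
  ∀ γ η : ℝ → M, IsGeodesic γ → IsGeodesic η →
    ConvexOn ℝ (Set.Icc (0:ℝ) 1) (fun t => dist (γ t) (η t))
def geoClosedConvexHull [MetricSpace M] (A : Set M) : Set M :=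
  ⋂₀ {C : Set M | GeoConvex C ∧ IsClosed C ∧ A ⊆ C}


lemma ray_affine {E : Type*} [NormedAddCommGroup E] [InnerProductSpace ℝ E]
    (f : ℝ → E) (hf : ∀ s ∈ Set.Ici (0:ℝ), ∀ t ∈ Set.Ici (0:ℝ), dist (f s) (f t) = |s - t|) :
    ∀ s ∈ Set.Ici (0:ℝ), f s = f 0 + s • (f 1 - f 0) := by
  have hn : ∀ a ∈ Set.Ici (0:ℝ), ‖f a - f 0‖ = a := by
    intro a ha
    rw [← dist_eq_norm, hf a ha 0 (Set.mem_Ici.mpr le_rfl), sub_zero, abs_of_nonneg ha]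
  have hin : ∀ a ∈ Set.Ici (0:ℝ), ∀ b ∈ Set.Ici (0:ℝ),
      (inner ℝ (f a - f 0) (f b - f 0) : ℝ) = a * b := by
    intro a ha b hb
    have h1 := hn a ha
    have h2 := hn b hb
    have h3 : ‖(f a - f 0) - (f b - f 0)‖ = |a - b| := by
      rw [sub_sub_sub_cancel_right, ← dist_eq_norm, hf a ha b hb]
    have h4 := norm_sub_sq_real (f a - f 0) (f b - f 0)
    rw [h1, h2, h3, sq_abs] at h4
    linear_combination h4 / 2
  intro s hs
  have h1 : (1:ℝ) ∈ Set.Ici (0:ℝ) := by norm_num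
  have hx := hn s hs
  have hy := hn 1 h1
  have hxy := hin s hs 1 h1
  have hns : ‖s • (f 1 - f 0)‖ = |s| := by
    rw [norm_smul, hy, mul_one, Real.norm_eq_abs]
  have hzero : ‖(f s - f 0) - s • (f 1 - f 0)‖ ^ 2 = 0 := by
    have h5 := norm_sub_sq_real (f s - f 0) (s • (f 1 - f 0))
    rw [real_inner_smul_right, hxy, hx, hns, sq_abs] at h5
    rw [h5]; ring
  have hzero' : (f s - f 0) - s • (f 1 - f 0) = 0 :=
    norm_eq_zero.mp (pow_eq_zero_iff (n := 2) (by norm_num) |>.mp hzero)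
  exact sub_eq_iff_eq_add'.mp (sub_eq_zero.mp hzero')

lemma flat_cos {M : Type*} [MetricSpace M] (A : Set M) (α β : ℝ → M)
    (hα : ∀ s ∈ Set.Ici (0:ℝ), ∀ t ∈ Set.Ici (0:ℝ), dist (α s) (α t) = |s - t|)
    (hβ : ∀ s ∈ Set.Ici (0:ℝ), ∀ t ∈ Set.Ici (0:ℝ), dist (β s) (β t) = |s - t|)
    (h0 : α 0 = β 0)
    (hαA : ∀ s, 0 ≤ s → α s ∈ A) (hβA : ∀ s, 0 ≤ s → β s ∈ A)
    (hflat : ∃ S : Set (EuclideanSpace ℝ (Fin 2)), Convex ℝ S ∧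
      Nonempty (↥(geoClosedConvexHull A) ≃ᵢ ↥S)) :
    ∃ c : ℝ, c ≤ 1 ∧ ∀ s, 0 ≤ s → ∀ u, 0 ≤ u →
      dist (α s) (β u) ^ 2 = s ^ 2 + u ^ 2 - 2 * s * u * c := by
  classical
  obtain ⟨S, -, ⟨e⟩⟩ := hflat
  have hsub : A ⊆ geoClosedConvexHull A := by
    intro x hx C hC
    exact hC.2.2 hx
  set F : ℝ → EuclideanSpace ℝ (Fin 2) :=
    fun s => ((e ⟨α (max s 0), hsub (hαA _ (le_max_right s 0))⟩ : S) :
      EuclideanSpace ℝ (Fin 2)) with hF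
  set G : ℝ → EuclideanSpace ℝ (Fin 2) :=
    fun s => ((e ⟨β (max s 0), hsub (hβA _ (le_max_right s 0))⟩ : S) :
      EuclideanSpace ℝ (Fin 2)) with hG
  have hFd : ∀ s ∈ Set.Ici (0:ℝ), ∀ t ∈ Set.Ici (0:ℝ), dist (F s) (F t) = |s - t| := by
    intro s hs t ht
    calc dist (F s) (F t)
        = dist (e ⟨α (max s 0), hsub (hαA _ (le_max_right s 0))⟩)
            (e ⟨α (max t 0), hsub (hαA _ (le_max_right t 0))⟩) := (Subtype.dist_eq _ _).symm
      _ = dist (α (max s 0)) (α (max t 0)) := by rw [e.dist_eq, Subtype.dist_eq]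
      _ = |s - t| := by rw [max_eq_left hs, max_eq_left ht, hα s hs t ht]
  have hGd : ∀ s ∈ Set.Ici (0:ℝ), ∀ t ∈ Set.Ici (0:ℝ), dist (G s) (G t) = |s - t| := by
    intro s hs t ht
    calc dist (G s) (G t)
        = dist (e ⟨β (max s 0), hsub (hβA _ (le_max_right s 0))⟩)
            (e ⟨β (max t 0), hsub (hβA _ (le_max_right t 0))⟩) := (Subtype.dist_eq _ _).symm
      _ = dist (β (max s 0)) (β (max t 0)) := by rw [e.dist_eq, Subtype.dist_eq]
      _ = |s - t| := by rw [max_eq_left hs, max_eq_left ht, hβ s hs t ht]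
  have hFGd : ∀ s ∈ Set.Ici (0:ℝ), ∀ t ∈ Set.Ici (0:ℝ), dist (F s) (G t) = dist (α s) (β t) := by
    intro s hs t ht
    calc dist (F s) (G t)
        = dist (e ⟨α (max s 0), hsub (hαA _ (le_max_right s 0))⟩)
            (e ⟨β (max t 0), hsub (hβA _ (le_max_right t 0))⟩) := (Subtype.dist_eq _ _).symm
      _ = dist (α (max s 0)) (β (max t 0)) := by rw [e.dist_eq, Subtype.dist_eq]
      _ = dist (α s) (β t) := by rw [max_eq_left hs, max_eq_left ht]
  have hFG0 : F 0 = G 0 := by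
    have h00 : (⟨α (max 0 0), hsub (hαA _ (le_max_right (0:ℝ) 0))⟩ :
        geoClosedConvexHull A) = ⟨β (max 0 0), hsub (hβA _ (le_max_right (0:ℝ) 0))⟩ :=
      Subtype.ext (by simpa using h0)
    simp only [hF, hG, h00]
  have hFa := ray_affine F hFd
  have hGa := ray_affine G hGd
  set w := F 1 - F 0 with hw
  set v := G 1 - G 0 with hv
  have hnw : ‖w‖ = 1 := by
    rw [hw, ← dist_eq_norm, dist_comm, hFd 0 (Set.mem_Ici.mpr le_rfl) 1 (Set.mem_Ici.mpr zero_le_one)]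
    norm_num
  have hnv : ‖v‖ = 1 := by
    rw [hv, ← dist_eq_norm, dist_comm, hGd 0 (Set.mem_Ici.mpr le_rfl) 1 (Set.mem_Ici.mpr zero_le_one)]
    norm_num
  refine ⟨inner ℝ w v, ?_, ?_⟩
  · have := real_inner_le_norm w v
    rw [hnw, hnv] at this
    linarith
  · intro s hs u hu
    have hFs := hFa s hs
    have hGu := hGa u hu
    have hd : dist (α s) (β u) = ‖s • w - u • v‖ := by
      rw [← hFGd s hs u hu, dist_eq_norm, hFs, hGu, hFG0]
      congr 1
      abel
    rw [hd, norm_sub_sq_real, norm_smul, norm_smul, hnw, hnv,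
      real_inner_smul_left, real_inner_smul_right, Real.norm_eq_abs, Real.norm_eq_abs,
      mul_one, mul_one, sq_abs, sq_abs]
    ring

set_option maxHeartbeats 2000000 in
theorem stmt12 [MetricSpace M] [CompleteSpace M] (hgeo : GeodesicSpace M)
    (hB : BusemannConvex M)
    (γ : ℝ → M) (hγ : ∀ s t : ℝ, dist (γ s) (γ t) = |s - t|)
    (η : ℝ → M) (hη : ∀ s ∈ Set.Ici (0:ℝ), ∀ t ∈ Set.Ici (0:ℝ),
      dist (η s) (η t) = |s - t|)
    (h0 : γ 0 = η 0)
    (hflatP : ∃ S : Set (EuclideanSpace ℝ (Fin 2)), Convex ℝ S ∧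
      Nonempty (↥(geoClosedConvexHull (γ '' Set.Ici 0 ∪ η '' Set.Ici 0)) ≃ᵢ ↥S))
    (hflatN : ∃ S : Set (EuclideanSpace ℝ (Fin 2)), Convex ℝ S ∧
      Nonempty (↥(geoClosedConvexHull (γ '' Set.Iic 0 ∪ η '' Set.Ici 0)) ≃ᵢ ↥S)) :
    ∀ sm sp t lam : ℝ, sm < 0 → 0 < sp → 0 ≤ t → lam ∈ Set.Ioo (0:ℝ) 1 →
      (1 - lam) * sm + lam * sp = 0 →
      dist (η t) (γ 0) ^ 2 ≤
        (1 - lam) * dist (η t) (γ sm) ^ 2 + lam * dist (η t) (γ sp) ^ 2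
          - (1 - lam) * lam * dist (γ sm) (γ sp) ^ 2 := by
  intro sm sp t lam hsm hsp ht hlam hcomb
  obtain ⟨cp, hcp1, hcpf⟩ := flat_cos (γ '' Set.Ici 0 ∪ η '' Set.Ici 0) γ η
    (fun s _ t' _ => hγ s t') hη h0
    (fun s hs => Set.mem_union_left _ ⟨s, hs, rfl⟩)
    (fun s hs => Set.mem_union_right _ ⟨s, hs, rfl⟩) hflatP
  obtain ⟨cm, hcm1, hcmf⟩ := flat_cos (γ '' Set.Iic 0 ∪ η '' Set.Ici 0)
    (fun s => γ (-s)) η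
    (fun s _ t' _ => by
      rw [hγ, show -s - -t' = -(s - t') by ring, abs_neg])
    hη (by simpa using h0)
    (fun s hs => Set.mem_union_left _ ⟨-s, by simpa using hs, rfl⟩)
    (fun s hs => Set.mem_union_right _ ⟨s, hs, rfl⟩) hflatN
  set a : ℝ := -sm with ha
  have hapos : 0 < a := by simp [ha]; linarith
  have e3 : dist (η t) (γ 0) = t := by
    rw [h0, hη t ht 0 (Set.mem_Ici.mpr le_rfl), sub_zero, abs_of_nonneg ht]
  have e4 : dist (γ sm) (γ sp) = a + sp := by
    rw [hγ, abs_of_nonpos (by linarith : sm - sp ≤ 0)]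
    rw [ha]; ring
  have e1 : dist (η t) (γ sm) ^ 2 = a ^ 2 + t ^ 2 - 2 * a * t * cm := by
    have h := hcmf a hapos.le t ht
    rw [show -a = sm by rw [ha]; ring] at h
    rw [dist_comm (η t) (γ sm)]
    exact h
  have e2 : dist (η t) (γ sp) ^ 2 = sp ^ 2 + t ^ 2 - 2 * sp * t * cp := by
    have h := hcpf sp hsp.le t ht
    rw [dist_comm (η t) (γ sp)]
    exact h
  have hc : cm + cp ≤ 0 := by
    have hb : ∀ u : ℝ, 0 < u → u ≤ 1 → cm + cp ≤ u := by
      intro u hu hu1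
      have htri : dist (γ (-1)) (γ 1) ≤ dist (γ (-1)) (η u) + dist (η u) (γ 1) :=
        dist_triangle _ _ _
      have hd1 : dist (γ (-1)) (γ 1) = 2 := by rw [hγ]; norm_num
      have hdm2 := hcmf 1 zero_le_one u hu.le
      have hdp2 := hcpf 1 zero_le_one u hu.le
      have hdm : dist (γ (-1)) (η u) ≤ 1 - u * cm + u ^ 2 / 2 := by
        have hnn : 0 ≤ 1 - u * cm + u ^ 2 / 2 := by
          nlinarith [mul_le_mul_of_nonneg_left hcm1 hu.le, sq_nonneg u]
        have h2 : dist (γ (-1)) (η u) ^ 2 ≤ (1 - u * cm + u ^ 2 / 2) ^ 2 := by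
          rw [hdm2]; nlinarith [sq_nonneg (u * cm - u ^ 2 / 2)]
        nlinarith [dist_nonneg (x := γ (-1)) (y := η u), hnn, h2]
      have hdp : dist (η u) (γ 1) ≤ 1 - u * cp + u ^ 2 / 2 := by
        have hnn : 0 ≤ 1 - u * cp + u ^ 2 / 2 := by
          nlinarith [mul_le_mul_of_nonneg_left hcp1 hu.le, sq_nonneg u]
        have h2 : dist (η u) (γ 1) ^ 2 ≤ (1 - u * cp + u ^ 2 / 2) ^ 2 := by
          rw [dist_comm, hdp2]; nlinarith [sq_nonneg (u * cp - u ^ 2 / 2)]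
        nlinarith [dist_nonneg (x := η u) (y := γ 1), hnn, h2]
      have hsum : dist (γ (-1)) (γ 1) ≤ (1 - u * cm + u ^ 2 / 2) + (1 - u * cp + u ^ 2 / 2) :=
        le_trans htri (add_le_add hdm hdp)
      rw [hd1] at hsum
      nlinarith [hsum, hu]
    by_contra hpos
    push_neg at hpos
    have h1 := hb (min ((cm + cp) / 2) 1) (lt_min (by linarith) one_pos) (min_le_right _ _)
    have h2 := min_le_left ((cm + cp) / 2) 1
    linarith
  rw [e3, e1, e2, e4]
  have hE : (1 - lam) * a - lam * sp = 0 := by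
    rw [ha]; linear_combination -hcomb
  have hgoal : (1 - lam) * (a ^ 2 + t ^ 2 - 2 * a * t * cm)
      + lam * (sp ^ 2 + t ^ 2 - 2 * sp * t * cp) - (1 - lam) * lam * (a + sp) ^ 2
      = t ^ 2 - 2 * t * (lam * sp) * (cm + cp) := by
    linear_combination (((1 - lam) * a - lam * sp) - 2 * t * cm) * hE
  have hprod : 0 ≤ t * (lam * sp) * (-(cm + cp)) :=
    mul_nonneg (mul_nonneg ht (mul_nonneg hlam.1.le hsp.le)) (by linarith)
  nlinarith [hgoal, hprod]
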